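/- Let d ≥ 2, r > 0, and A ⊆ ℝ^d be an r-separated set (all pairwise distances in A are at least r). Then there exists a K-bilipschitz bijection Φ : ℝ^d → ℝ^d with K = 16·max{3d/r, 1} such that Φ(A) ⊆ ℤ^d. -/

import Mathlib

open Classical in
noncomputable def pushPert {E : Type*} [NormedAddCommGroup E] [NormedSpace ℝ E]
    (S : Set E) (R : ℝ) (v : E → E) : E → E :=
  fun x => if h : ∃ s, s ∈ S ∧ dist x s < R then
    (1 - dist x h.choose / R) • v h.choose else 0

section Push
open scoped NNReal
variable {E : Type*} [NormedAddCommGroup E] [NormedSpace ℝ E]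
  {S : Set E} {R : ℝ} {v : E → E}

lemma pushPert_norm_le (hR : 0 < R) (hv : ∀ x, ‖v x‖ ≤ R / 2)
    (x : E) (h : ∃ s, s ∈ S ∧ dist x s < R) :
    ‖pushPert S R v x‖ ≤ (1/2) * (R - dist x h.choose) := by
  have hd := h.choose_spec.2
  simp only [pushPert]
  rw [dif_pos h, norm_smul]
  have h1 : 0 ≤ 1 - dist x h.choose / R := by
    rw [sub_nonneg, div_le_one hR]; exact hd.le
  rw [Real.norm_eq_abs, abs_of_nonneg h1]
  calc (1 - dist x h.choose / R) * ‖v h.choose‖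
      ≤ (1 - dist x h.choose / R) * (R/2) := by
        exact mul_le_mul_of_nonneg_left (hv _) h1
    _ = (1/2) * (R - dist x h.choose) := by field_simp

lemma pushPert_lip (hR : 0 < R)
    (hsep : ∀ s ∈ S, ∀ t ∈ S, s ≠ t → 2 * R ≤ dist s t)
    (hv : ∀ x, ‖v x‖ ≤ R / 2) (x y : E) :
    ‖pushPert S R v x - pushPert S R v y‖ ≤ (1/2) * dist x y := by
  -- helper for the mixed case
  have mixed : ∀ a b : E, (∃ s, s ∈ S ∧ dist a s < R) →
      ¬ (∃ s, s ∈ S ∧ dist b s < R) →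
      ‖pushPert S R v a - pushPert S R v b‖ ≤ (1/2) * dist a b := by
    intro a b ha hb
    simp only [pushPert]
    rw [dif_neg hb, dif_pos ha, sub_zero]
    rw [show (1 - dist a ha.choose / R) • v ha.choose = pushPert S R v a by simp only [pushPert]; rw [dif_pos ha]]
    refine (pushPert_norm_le hR hv a ha).trans ?_
    have hbs : R ≤ dist b ha.choose := by
      push_neg at hb
      exact hb _ ha.choose_spec.1
    have : R - dist a ha.choose ≤ dist a b := by
      have := dist_triangle b a ha.choose
      rw [dist_comm b a] at this
      linarith
    linarith [this, dist_nonneg (x := a) (y := b)]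
  by_cases hx : ∃ s, s ∈ S ∧ dist x s < R
  · by_cases hy : ∃ s, s ∈ S ∧ dist y s < R
    · by_cases hst : hx.choose = hy.choose
      · -- same center
        simp only [pushPert]
        rw [dif_pos hx, dif_pos hy, ← hst, ← sub_smul, norm_smul]
        have : (1 - dist x hx.choose / R) - (1 - dist y hx.choose / R)
            = (dist y hx.choose - dist x hx.choose) / R := by field_simp; ring
        rw [this, Real.norm_eq_abs, abs_div, abs_of_pos hR]
        have h1 : |dist y hx.choose - dist x hx.choose| ≤ dist x y := by
          rw [dist_comm x y]
          exact abs_dist_sub_le y x hx.choose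
        calc |dist y hx.choose - dist x hx.choose| / R * ‖v hx.choose‖
            ≤ (dist x y) / R * (R/2) := by
              gcongr
              · exact hv _
          _ = (1/2) * dist x y := by field_simp
      · -- different centers
        have key : (R - dist x hx.choose) + (R - dist y hy.choose) ≤ dist x y := by
          have h2R := hsep _ hx.choose_spec.1 _ hy.choose_spec.1 hst
          have t4 : dist hx.choose hy.choose ≤
              dist hx.choose x + dist x y + dist y hy.choose := dist_triangle4 _ _ _ _
          rw [dist_comm hx.choose x] at t4
          linarith
        calc ‖pushPert S R v x - pushPert S R v y‖
            ≤ ‖pushPert S R v x‖ + ‖pushPert S R v y‖ := norm_sub_le _ _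
          _ ≤ (1/2) * (R - dist x hx.choose) + (1/2) * (R - dist y hy.choose) :=
              add_le_add (pushPert_norm_le hR hv x hx) (pushPert_norm_le hR hv y hy)
          _ ≤ (1/2) * dist x y := by linarith
    · exact mixed x y hx hy
  · by_cases hy : ∃ s, s ∈ S ∧ dist y s < R
    · rw [norm_sub_rev, dist_comm]; exact mixed y x hy hx
    · simp [pushPert, dif_neg hx, dif_neg hy, dist_nonneg]

lemma pushPert_apply_mem (hR : 0 < R)
    (hsep : ∀ s ∈ S, ∀ t ∈ S, s ≠ t → 2 * R ≤ dist s t)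
    {s : E} (hs : s ∈ S) : pushPert S R v s = v s := by
  have h : ∃ t, t ∈ S ∧ dist s t < R := ⟨s, hs, by simpa using hR⟩
  have hts : h.choose = s := by
    by_contra hne
    have := hsep _ h.choose_spec.1 _ hs hne
    rw [dist_comm] at this
    linarith [h.choose_spec.2]
  simp only [pushPert]
  rw [dif_pos h, hts, dist_self, zero_div, sub_zero, one_smul]

lemma push_upper (hR : 0 < R)
    (hsep : ∀ s ∈ S, ∀ t ∈ S, s ≠ t → 2 * R ≤ dist s t)
    (hv : ∀ x, ‖v x‖ ≤ R / 2) (x y : E) :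
    dist (x + pushPert S R v x) (y + pushPert S R v y) ≤ (3/2) * dist x y := by
  have hlip := pushPert_lip hR hsep hv x y
  have h1 : dist (x + pushPert S R v x) (y + pushPert S R v y)
      ≤ ‖x - y‖ + ‖pushPert S R v x - pushPert S R v y‖ := by
    rw [dist_eq_norm]
    calc ‖(x + pushPert S R v x) - (y + pushPert S R v y)‖
        = ‖(x - y) + (pushPert S R v x - pushPert S R v y)‖ := by congr 1; abel
      _ ≤ _ := norm_add_le _ _
  simp only [dist_eq_norm] at *
  linarith

lemma push_lower (hR : 0 < R)
    (hsep : ∀ s ∈ S, ∀ t ∈ S, s ≠ t → 2 * R ≤ dist s t)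
    (hv : ∀ x, ‖v x‖ ≤ R / 2) (x y : E) :
    (1/2) * dist x y ≤ dist (x + pushPert S R v x) (y + pushPert S R v y) := by
  have hlip := pushPert_lip hR hsep hv x y
  have h1 : ‖x - y‖ ≤ ‖(x + pushPert S R v x) - (y + pushPert S R v y)‖
      + ‖pushPert S R v x - pushPert S R v y‖ := by
    calc ‖x - y‖ = ‖((x + pushPert S R v x) - (y + pushPert S R v y))
        - (pushPert S R v x - pushPert S R v y)‖ := by congr 1; abel
      _ ≤ _ := norm_sub_le _ _
  simp only [dist_eq_norm] at *
  linarith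

lemma push_surj [CompleteSpace E] (hR : 0 < R)
    (hsep : ∀ s ∈ S, ∀ t ∈ S, s ≠ t → 2 * R ≤ dist s t)
    (hv : ∀ x, ‖v x‖ ≤ R / 2) :
    Function.Surjective (fun x => x + pushPert S R v x) := by
  intro y
  have hne : Nonempty E := ⟨0⟩
  set F : E → E := fun x => y - pushPert S R v x with hF
  have hlip : LipschitzWith (1/2 : ℝ≥0) F := by
    apply LipschitzWith.of_dist_le_mul
    intro a b
    have := pushPert_lip hR hsep hv a b
    simp only [hF, dist_eq_norm]
    calc ‖(y - pushPert S R v a) - (y - pushPert S R v b)‖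
        = ‖pushPert S R v b - pushPert S R v a‖ := by congr 1; abel
      _ ≤ (1/2) * ‖a - b‖ := by rw [norm_sub_rev]; rw [dist_eq_norm] at this; linarith
      _ = ((1/2 : ℝ≥0) : ℝ) * ‖a - b‖ := by norm_num
  have hcontr : ContractingWith (1/2 : ℝ≥0) F :=
    ⟨by rw [← NNReal.coe_lt_coe]; norm_num, hlip⟩
  set x0 := ContractingWith.fixedPoint F hcontr with hx0
  refine ⟨x0, ?_⟩
  have hfix : y - pushPert S R v x0 = x0 := ContractingWith.fixedPoint_isFixedPt hcontr
  have h2 : (y - pushPert S R v x0) + pushPert S R v x0 = y := sub_add_cancel _ _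
  rw [hfix] at h2
  exact h2

end Push

/-- `f` is `L`-bilipschitz on the set `s`. -/
def IsBilipOn {α β : Type*} [PseudoMetricSpace α] [PseudoMetricSpace β]
    (L : ℝ) (f : α → β) (s : Set α) : Prop :=
  ∀ x ∈ s, ∀ y ∈ s, L⁻¹ * dist x y ≤ dist (f x) (f y) ∧ dist (f x) (f y) ≤ L * dist x y

/-- The integer lattice `ℤ^d` inside `ℝ^d`. -/
def intLattice (d : ℕ) : Set (EuclideanSpace ℝ (Fin d)) :=
  {x | ∀ i, ∃ z : ℤ, x i = z}

theorem stmt_6 (d : ℕ) (hd : 2 ≤ d) (r : ℝ) (hr : 0 < r)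
    (A : Set (EuclideanSpace ℝ (Fin d)))
    (hsep : ∀ a ∈ A, ∀ b ∈ A, a ≠ b → r ≤ dist a b) :
    ∃ Φ : EuclideanSpace ℝ (Fin d) → EuclideanSpace ℝ (Fin d),
      Function.Bijective Φ ∧
      IsBilipOn (16 * max (3 * d / r) 1) Φ Set.univ ∧
      Φ '' A ⊆ intLattice d := by
  classical
  have hd2 : (2:ℝ) ≤ d := by exact_mod_cast hd
  set M : ℝ := max (3 * d / r) 1 with hM
  have hM1 : 1 ≤ M := le_max_right _ _
  set R : ℝ := max (3 * d) r with hRdef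
  have hR : 0 < r := hr
  have hR0 : 0 < R := lt_of_lt_of_le hr (le_max_right _ _)
  have hR3d : 3 * (d:ℝ) ≤ R := le_max_left _ _
  have hRr : M * r = R := by
    rw [hM, hRdef, max_mul_of_nonneg _ _ hr.le, div_mul_cancel₀ _ hr.ne', one_mul]
  set c : ℝ := 2 * M with hc
  have hc0 : 0 < c := by rw [hc]; linarith
  set rd : EuclideanSpace ℝ (Fin d) → EuclideanSpace ℝ (Fin d) :=
    fun x => WithLp.toLp 2 (fun i => ((round (x i) : ℤ) : ℝ)) with hrd
  set v : EuclideanSpace ℝ (Fin d) → EuclideanSpace ℝ (Fin d) :=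
    fun x => rd x - x with hvdef
  have hvb : ∀ x, ‖v x‖ ≤ R / 2 := by
    intro x
    have h1 : ‖v x‖ ≤ Real.sqrt (d * (1/2 : ℝ)^2) := by
      rw [EuclideanSpace.norm_eq]
      apply Real.sqrt_le_sqrt
      calc ∑ i, ‖(v x) i‖^2 ≤ ∑ _i : Fin d, ((1:ℝ)/2)^2 := by
            apply Finset.sum_le_sum
            intro i _
            have hcoord : (v x) i = ((round (x i) : ℤ) : ℝ) - x i := by
              rw [hvdef]; simp [hrd, PiLp.sub_apply]
            rw [hcoord, Real.norm_eq_abs, abs_sub_comm]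
            have := abs_sub_round (x i)
            have habs : |x i - ↑(round (x i))| ≤ 1/2 := this
            nlinarith [abs_nonneg (x i - ↑(round (x i)))]
        _ = d * ((1:ℝ)/2)^2 := by
            rw [Finset.sum_const, Finset.card_univ, Fintype.card_fin, nsmul_eq_mul]
    have h2 : Real.sqrt ((d:ℝ) * (1/2)^2) ≤ Real.sqrt ((R/2)^2) := by
      apply Real.sqrt_le_sqrt
      nlinarith
    rw [Real.sqrt_sq (by positivity)] at h2
    linarith
  set S : Set (EuclideanSpace ℝ (Fin d)) := (fun x => c • x) '' A with hS
  have hsepS : ∀ s ∈ S, ∀ t ∈ S, s ≠ t → 2 * R ≤ dist s t := by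
    rintro _ ⟨a, ha, rfl⟩ _ ⟨b, hb, rfl⟩ hne
    have hab : a ≠ b := by rintro rfl; exact hne rfl
    have hdab := hsep a ha b hb hab
    have hds : dist (c • a) (c • b) = c * dist a b := by
      rw [dist_smul₀, Real.norm_eq_abs, abs_of_pos hc0]
    rw [hds]
    calc 2 * R = c * r := by rw [hc, ← hRr]; ring
      _ ≤ c * dist a b := by exact mul_le_mul_of_nonneg_left hdab hc0.le
  refine ⟨fun x => c • x + pushPert S R v (c • x), ⟨?_, ?_⟩, ?_, ?_⟩
  · -- injective
    intro x y hxy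
    have hlo := push_lower hR0 hsepS hvb (c • x) (c • y)
    simp only at hxy
    rw [hxy] at hlo
    simp only [dist_self] at hlo
    have : dist (c • x) (c • y) = 0 := by
      have := dist_nonneg (x := c • x) (y := c • y); linarith
    have hxy2 : c • x = c • y := by rwa [dist_eq_zero] at this
    exact smul_right_injective _ hc0.ne' hxy2
  · -- surjective
    intro y
    obtain ⟨z, hz⟩ := push_surj hR0 hsepS hvb y
    refine ⟨c⁻¹ • z, ?_⟩
    simp only [smul_inv_smul₀ hc0.ne']
    exact hz
  · -- bilipschitz
    intro x _ y _
    have hup := push_upper hR0 hsepS hvb (c • x) (c • y)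
    have hlo := push_lower hR0 hsepS hvb (c • x) (c • y)
    have hds : dist (c • x) (c • y) = c * dist x y := by
      rw [dist_smul₀, Real.norm_eq_abs, abs_of_pos hc0]
    rw [hds] at hup hlo
    have hdn := dist_nonneg (x := x) (y := y)
    constructor
    · have hKinv : (16 * M)⁻¹ ≤ M := by
        have h16 : (1:ℝ) ≤ 16 * M := by linarith
        have := inv_le_one_of_one_le₀ h16
        linarith
      calc (16 * M)⁻¹ * dist x y ≤ M * dist x y := by
            exact mul_le_mul_of_nonneg_right hKinv hdn
        _ = 1/2 * (c * dist x y) := by rw [hc]; ring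
        _ ≤ _ := hlo
    · calc dist _ _ ≤ 3/2 * (c * dist x y) := hup
        _ = 3 * M * dist x y := by rw [hc]; ring
        _ ≤ 16 * M * dist x y := by nlinarith
  · -- lattice
    rintro _ ⟨a, ha, rfl⟩
    have hs : c • a ∈ S := ⟨a, ha, rfl⟩
    have hp : pushPert S R v (c • a) = v (c • a) := pushPert_apply_mem hR0 hsepS hs
    simp only [hp]; simp only [hvdef]
    have heq : c • a + (rd (c • a) - c • a) = rd (c • a) := by abel
    rw [heq]
    intro i
    exact ⟨round ((c • a) i), rfl⟩
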